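/- Symmetry preservation of Integrated Gradients: let F : ℝⁿ → ℝ be continuously differentiable and symmetric in coordinates i and j, i.e. F(x) = F(x with coordinates i and j swapped) for all x. If z, z' ∈ ℝⁿ satisfy z_i = z_j and z'_i = z'_j, then the Integrated Gradients attributions along the straight-line path γ(α) = z' + α·(z − z') satisfy A_i(F, γ) = A_j(F, γ). -/

import Mathlib

open MeasureTheory

/-- The path-method attribution to coordinate `i` of function `F` along path `γ`:
`A_i(F, γ) = ∫₀¹ ∂F/∂x_i(γ(α)) · γ_i'(α) dα`. -/
noncomputable def pathAttr (n : ℕ) (F : (Fin n → ℝ) → ℝ) (γ : ℝ → (Fin n → ℝ))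
    (i : Fin n) : ℝ :=
  ∫ α in (0:ℝ)..1, fderiv ℝ F (γ α) (Pi.single i 1) * deriv (fun s => γ s i) α

/-- The coordinate-swap as a continuous linear map. -/
noncomputable def swapCLM (n : ℕ) (i j : Fin n) :
    (Fin n → ℝ) →L[ℝ] (Fin n → ℝ) :=
  ContinuousLinearMap.pi fun k => ContinuousLinearMap.proj (Equiv.swap i j k)

lemma swapCLM_apply (n : ℕ) (i j : Fin n) (x : Fin n → ℝ) :
    swapCLM n i j x = x ∘ Equiv.swap i j := rfl

/-- Symmetry preservation of Integrated Gradients: if `F` is symmetric in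
coordinates `i` and `j`, and both the input `z` and the baseline `z'` agree on
coordinates `i` and `j`, then Integrated Gradients (the path method for the
straight-line path `γ(α) = z' + α • (z - z')`) gives equal attributions to `i`
and `j`. -/
theorem integrated_gradients_symmetry (n : ℕ) (F : (Fin n → ℝ) → ℝ) (i j : Fin n)
    (z z' : Fin n → ℝ) (hF : ContDiff ℝ 1 F)
    (hsym : ∀ x : Fin n → ℝ, F x = F (x ∘ Equiv.swap i j))
    (hz : z i = z j) (hz' : z' i = z' j) :
    pathAttr n F (fun α => z' + α • (z - z')) i
      = pathAttr n F (fun α => z' + α • (z - z')) j := by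
  unfold pathAttr
  apply intervalIntegral.integral_congr
  intro α _
  set x : Fin n → ℝ := z' + α • (z - z') with hx
  have hxij : x i = x j := by
    simp [hx, hz, hz']
  -- the swap map fixes x
  have hfix : swapCLM n i j x = x := by
    funext k
    simp only [swapCLM_apply, Function.comp_apply]
    rcases eq_or_ne k i with rfl | hki
    · rw [Equiv.swap_apply_left]; exact hxij.symm
    rcases eq_or_ne k j with rfl | hkj
    · rw [Equiv.swap_apply_right]; exact hxij
    · rw [Equiv.swap_apply_of_ne_of_ne hki hkj]
  have hdF : Differentiable ℝ F := hF.differentiable one_ne_zero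
  -- chain rule: fderiv F x = fderiv F (σ x) ∘ σ
  have hcomp : F = F ∘ (swapCLM n i j) := by
    funext y; exact hsym y
  have hfderiv : fderiv ℝ F x
      = (fderiv ℝ F (swapCLM n i j x)).comp (swapCLM n i j) := by
    conv_lhs => rw [hcomp]
    rw [fderiv_comp x (hdF _) ((swapCLM n i j).differentiableAt),
      (swapCLM n i j).fderiv]
  have hswap_single : swapCLM n i j (Pi.single i 1) = Pi.single j 1 := by
    funext k
    simp only [swapCLM_apply, Function.comp_apply]
    rcases eq_or_ne k j with rfl | hkj
    · rw [Equiv.swap_apply_right]; simp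
    · rw [Pi.single_eq_of_ne hkj]
      have : Equiv.swap i j k ≠ i := by
        intro h
        exact hkj (by simpa using congrArg (Equiv.swap i j) h)
      rw [Pi.single_eq_of_ne this]
  have hkey : fderiv ℝ F x (Pi.single i 1) = fderiv ℝ F x (Pi.single j 1) := by
    conv_lhs => rw [hfderiv]
    rw [ContinuousLinearMap.comp_apply, hswap_single, hfix]
  have hderiv : ∀ k : Fin n,
      deriv (fun s => (z' + s • (z - z')) k) α = z k - z' k := by
    intro k
    have : (fun s : ℝ => (z' + s • (z - z')) k)
        = fun s : ℝ => z' k + s * (z k - z' k) := by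
      funext s; simp
    rw [this]
    simp [deriv_const_mul_field]
  show fderiv ℝ F x (Pi.single i 1) * deriv (fun s => (z' + s • (z - z')) i) α
      = fderiv ℝ F x (Pi.single j 1) * deriv (fun s => (z' + s • (z - z')) j) α
  rw [hkey, hderiv, hderiv, hz, hz']
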